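/- Let $n,m\geq 1$; let $a_1,\dots,a_n\in\mathbb{R}^m$, $b\in\mathbb{R}^n$, $c\in\mathbb{R}^m$, $C\in\mathbb{R}$, $\phi_1,\dots,\phi_n\in\mathbb{R}^n$, and parameters $\lambda,\lambda_\theta,\gamma,\varepsilon>0$. For $\alpha\in\mathbb{R}^n$ define $U(\alpha):=\lambda I_n+\sum_{i=1}^n\alpha_i\,\phi_i\phi_i^\top$ and, whenever $U(\alpha)$ is positive definite, define $F(\alpha):=\sum_{i=1}^n\alpha_ib_i+\frac{1}{4\lambda_\theta}\sum_{j=1}^m\big(c_j+\sum_{i=1}^n\alpha_ia_{ij}\big)^2-\varepsilon\log\det U(\alpha)+\frac{1}{4\gamma}\|\alpha\|_2^2+\varepsilon n\log(\varepsilon/e)+C$. Then for every $\alpha\in\mathbb{R}^n$ with $U(\alpha)$ positive definite, and for every symmetric positive definite $B\in\mathbb{R}^{n\times n}$, every $\theta\in\mathbb{R}^m$ and every $\delta\in\mathbb{R}^n$ satisfying $b_i+a_i^\top\theta=\phi_i^\top B\,\phi_i+\delta_i$ for all $i\in\{1,\dots,n\}$, one has $c^\top\theta-\lambda\operatorname{Tr}(B)-\lambda_\theta\|\theta\|_2^2-\gamma\|\delta\|_2^2+\varepsilon\log\det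 B+C\;\leq\;F(\alpha)$. -/

import Mathlib

open scoped Matrix

open Matrix Finset

lemma aux_scalar {e x : ℝ} (he : 0 < e) (hx : 0 < x) :
    e - e * Real.log e + e * Real.log x ≤ x := by
  have h := Real.log_le_sub_one_of_pos (div_pos hx he)
  rw [Real.log_div hx.ne' he.ne'] at h
  have h2 : e * (Real.log x - Real.log e) ≤ e * (x / e - 1) :=
    mul_le_mul_of_nonneg_left h he.le
  have h3 : e * (x / e - 1) = x - e := by field_simp
  nlinarith

lemma aux_trace {n : ℕ} {A : Matrix (Fin n) (Fin n) ℝ} (hA : A.IsHermitian) :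
    A.trace = ∑ i, hA.eigenvalues i := by
  conv_lhs => rw [hA.spectral_theorem]
  rw [Unitary.conjStarAlgAut_apply, Matrix.trace_mul_comm, ← mul_assoc]
  have h1 : (star (hA.eigenvectorUnitary : Matrix (Fin n) (Fin n) ℝ)) *
      (hA.eigenvectorUnitary : Matrix (Fin n) (Fin n) ℝ) = 1 :=
    Matrix.UnitaryGroup.star_mul_self _
  rw [h1, one_mul]
  simp [Matrix.trace_diagonal]

/-- For a positive definite real matrix `M`, `ε n - ε n log ε + ε log det M ≤ tr M`. -/
lemma aux_barrier {n : ℕ} {M : Matrix (Fin n) (Fin n) ℝ} (hM : M.PosDef)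
    {e : ℝ} (he : 0 < e) :
    e * n - e * n * Real.log e + e * Real.log M.det ≤ M.trace := by
  have hdet : M.det = ∏ i, hM.isHermitian.eigenvalues i := by
    have := hM.isHermitian.det_eq_prod_eigenvalues
    simpa using this
  have hlog : Real.log M.det = ∑ i, Real.log (hM.isHermitian.eigenvalues i) := by
    rw [hdet, Real.log_prod]
    exact fun i _ => (hM.eigenvalues_pos i).ne'
  rw [aux_trace hM.isHermitian, hlog]
  have key : ∀ i : Fin n, e - e * Real.log e + e * Real.log (hM.isHermitian.eigenvalues i)
      ≤ hM.isHermitian.eigenvalues i :=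
    fun i => aux_scalar he (hM.eigenvalues_pos i)
  calc e * n - e * n * Real.log e + e * ∑ i, Real.log (hM.isHermitian.eigenvalues i)
      = ∑ i : Fin n, (e - e * Real.log e + e * Real.log (hM.isHermitian.eigenvalues i)) := by
        simp [Finset.sum_add_distrib, Finset.sum_sub_distrib, Finset.mul_sum]
        ring
    _ ≤ ∑ i, hM.isHermitian.eigenvalues i := Finset.sum_le_sum fun i _ => key i

lemma aux_tr_vmv {n : ℕ} (u v : Fin n → ℝ) (B : Matrix (Fin n) (Fin n) ℝ) :
    (Matrix.vecMulVec u v * B).trace = v ⬝ᵥ B *ᵥ u := by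
  simp only [Matrix.trace, Matrix.diag, Matrix.mul_apply, Matrix.vecMulVec_apply,
    dotProduct, Matrix.mulVec]
  rw [Finset.sum_comm]
  congr 1; ext k
  rw [Finset.mul_sum]
  congr 1; ext i; ring

lemma aux_conj {n : ℕ} {S B : Matrix (Fin n) (Fin n) ℝ} (hS : S.IsHermitian)
    (hSdet : S.det ≠ 0) (hB : B.PosDef) : (S * B * S).PosDef := by
  refine Matrix.PosDef.of_dotProduct_mulVec_pos ?_ ?_
  · show (S * B * S)ᴴ = _
    simp only [Matrix.conjTranspose_mul, hS.eq, hB.isHermitian.eq, mul_assoc]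
  · intro x hx
    have hSu : IsUnit S := (Matrix.isUnit_iff_isUnit_det S).2 (isUnit_iff_ne_zero.mpr hSdet)
    have hinj := Matrix.mulVec_injective_iff_isUnit.mpr hSu
    have hSx : S *ᵥ x ≠ 0 := fun h => hx (hinj (by simpa using h))
    have hq := hB.dotProduct_mulVec_pos hSx
    have hsymm : Sᵀ = S := by
      ext i j
      have := hS.apply i j
      simpa using this
    have heq : star x ⬝ᵥ (S * B * S) *ᵥ x = star (S *ᵥ x) ⬝ᵥ B *ᵥ (S *ᵥ x) := by
      rw [← Matrix.mulVec_mulVec, ← Matrix.mulVec_mulVec, Matrix.dotProduct_mulVec]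
      congr 1
      rw [show star x ᵥ* S = star (S *ᵥ x) from by
        rw [← Matrix.vecMul_transpose, hsymm]
        simp [star_trivial]]
    rw [heq]; exact hq

/-- **Weak duality for the log-barrier SDP (Section V.B).** With
`U(α) = λ Iₙ + ∑ᵢ αᵢ φᵢφᵢᵀ` and dual objective
`F(α) = ∑ᵢ αᵢbᵢ + (1/4λ_θ) ∑ⱼ (cⱼ + ∑ᵢ αᵢ aᵢⱼ)² - ε log det U(α) + (1/4γ)‖α‖₂²
  + ε n log(ε/e) + C`,
every primal-feasible triple `(B ≻ 0, θ, δ)` with `bᵢ + aᵢᵀθ = φᵢᵀBφᵢ + δᵢ` satisfies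
`cᵀθ - λ Tr(B) - λ_θ‖θ‖₂² - γ‖δ‖₂² + ε log det B + C ≤ F(α)` whenever `U(α) ≻ 0`. -/
theorem statement_11 {n m : ℕ} (hn : 1 ≤ n) (hm : 1 ≤ m)
    (a : Fin n → Fin m → ℝ) (b : Fin n → ℝ) (c : Fin m → ℝ) (C : ℝ)
    (φ : Fin n → Fin n → ℝ)
    (lam lamθ γ ε : ℝ) (hlam : 0 < lam) (hlamθ : 0 < lamθ) (hγ : 0 < γ) (hε : 0 < ε)
    (U : (Fin n → ℝ) → Matrix (Fin n) (Fin n) ℝ)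
    (hU : ∀ α, U α = lam • (1 : Matrix (Fin n) (Fin n) ℝ)
      + ∑ i, α i • Matrix.vecMulVec (φ i) (φ i))
    (F : (Fin n → ℝ) → ℝ)
    (hF : ∀ α, F α = ∑ i, α i * b i
      + 1 / (4 * lamθ) * ∑ j, (c j + ∑ i, α i * a i j) ^ 2
      - ε * Real.log (U α).det + 1 / (4 * γ) * ∑ i, α i ^ 2
      + ε * n * Real.log (ε / Real.exp 1) + C)
    (α : Fin n → ℝ) (hUα : (U α).PosDef)
    (B : Matrix (Fin n) (Fin n) ℝ) (hB : B.PosDef)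
    (θ : Fin m → ℝ) (δ : Fin n → ℝ)
    (hfeas : ∀ i, b i + a i ⬝ᵥ θ = φ i ⬝ᵥ B *ᵥ φ i + δ i) :
    c ⬝ᵥ θ - lam * B.trace - lamθ * ∑ j, θ j ^ 2 - γ * ∑ i, δ i ^ 2
      + ε * Real.log B.det + C ≤ F α := by
  -- square root of U α
  set S := (open MatrixOrder in CFC.sqrt (U α)) with hSdef
  have hSS : S * S = U α := by
    open MatrixOrder in exact CFC.sqrt_mul_sqrt_self (U α) hUα.posSemidef.nonneg
  have hSH : S.IsHermitian := by
    open MatrixOrder in exact (CFC.sqrt_nonneg (U α)).posSemidef.isHermitian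
  have hUdet : 0 < (U α).det := hUα.det_pos
  have hBdet : 0 < B.det := hB.det_pos
  have hSdet : S.det ≠ 0 := by
    intro h
    have : (U α).det = 0 := by rw [← hSS, Matrix.det_mul, h, mul_zero]
    exact hUdet.ne' this
  have hM : (S * B * S).PosDef := aux_conj hSH hSdet hB
  -- trace and det of S * B * S
  have htr : (S * B * S).trace = (U α * B).trace := by
    rw [Matrix.trace_mul_comm, ← mul_assoc, hSS]
  have hdet : (S * B * S).det = (U α).det * B.det := by
    rw [Matrix.det_mul, Matrix.det_mul, ← hSS, Matrix.det_mul]; ring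
  -- barrier inequality
  have hbar := aux_barrier hM hε
  rw [htr, hdet, Real.log_mul hUdet.ne' hBdet.ne'] at hbar
  -- trace of U α * B
  have htrU : (U α * B).trace = lam * B.trace + ∑ i, α i * (φ i ⬝ᵥ B *ᵥ φ i) := by
    rw [hU, add_mul, Finset.sum_mul, Matrix.trace_add, Matrix.trace_sum]
    congr 1
    · rw [Matrix.smul_mul, Matrix.trace_smul, one_mul]; rfl
    · refine Finset.sum_congr rfl fun i _ => ?_
      rw [Matrix.smul_mul, Matrix.trace_smul, aux_tr_vmv]; rfl
  -- log (ε / e)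
  have hloge : Real.log (ε / Real.exp 1) = Real.log ε - 1 := by
    rw [Real.log_div hε.ne' (Real.exp_ne_zero 1), Real.log_exp]
  -- feasibility rewriting
  have hsumb : ∑ i, α i * b i
      = ∑ i, α i * (φ i ⬝ᵥ B *ᵥ φ i) + ∑ i, α i * δ i - ∑ i, α i * (a i ⬝ᵥ θ) := by
    rw [← Finset.sum_add_distrib, ← Finset.sum_sub_distrib]
    refine Finset.sum_congr rfl fun i _ => ?_
    linear_combination α i * (hfeas i)
  -- swap sum for a-part
  have hswap : ∑ i, α i * (a i ⬝ᵥ θ) = ∑ j, (∑ i, α i * a i j) * θ j := by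
    simp only [dotProduct, Finset.mul_sum, Finset.sum_mul]
    rw [Finset.sum_comm]
    exact Finset.sum_congr rfl fun j _ => Finset.sum_congr rfl fun i _ => by ring
  -- θ inequality
  have hθ : ∑ j, c j * θ j - lamθ * ∑ j, θ j ^ 2
      ≤ - ∑ j, (∑ i, α i * a i j) * θ j + 1 / (4 * lamθ) * ∑ j, (c j + ∑ i, α i * a i j) ^ 2 := by
    rw [Finset.mul_sum, Finset.mul_sum, ← Finset.sum_neg_distrib, ← Finset.sum_add_distrib,
      ← Finset.sum_sub_distrib]
    refine Finset.sum_le_sum fun j _ => ?_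
    set s := ∑ i, α i * a i j
    have h4 : 0 < 4 * lamθ := by linarith
    have hkey : (-(s * θ j) + 1 / (4 * lamθ) * (c j + s) ^ 2) - (c j * θ j - lamθ * θ j ^ 2)
        = (c j + s - 2 * lamθ * θ j) ^ 2 / (4 * lamθ) := by
      field_simp; ring
    linarith [div_nonneg (sq_nonneg (c j + s - 2 * lamθ * θ j)) h4.le, hkey]
  -- δ inequality
  have hδ : - (γ * ∑ i, δ i ^ 2) ≤ ∑ i, α i * δ i + 1 / (4 * γ) * ∑ i, α i ^ 2 := by
    rw [Finset.mul_sum, Finset.mul_sum, ← Finset.sum_neg_distrib, ← Finset.sum_add_distrib]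
    refine Finset.sum_le_sum fun i _ => ?_
    have h4 : 0 < 4 * γ := by linarith
    have hkey : (α i * δ i + 1 / (4 * γ) * α i ^ 2) - (-(γ * δ i ^ 2))
        = (α i + 2 * γ * δ i) ^ 2 / (4 * γ) := by
      field_simp; ring
    linarith [div_nonneg (sq_nonneg (α i + 2 * γ * δ i)) h4.le, hkey]
  have hcθ : c ⬝ᵥ θ = ∑ j, c j * θ j := rfl
  rw [mul_add] at hbar
  have hexp : ε * (n : ℝ) * (Real.log ε - 1) = ε * n * Real.log ε - ε * n := by ring
  rw [hF, hsumb, hswap, hcθ, hloge, hexp]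
  linarith [hbar, hθ, hδ, htrU]
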